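/- Let A = A₀ ⊕ A₁ be a finite-dimensional supercommutative superalgebra over a field F of characteristic zero, and suppose the supertrace form b(x,y) := str(L_{xy}) is nondegenerate, where L_z denotes left multiplication by z and str is the supertrace. Then A₁ = 0, i.e., A is purely even. -/
import Mathlib


noncomputable section

open DirectSum

/-- The projection of a graded algebra onto its `i`-th graded component, viewed as an
endomorphism of `A`. -/
def gradedProj {F A : Type*} [Field F] [Ring A] [Algebra F A]
    (𝒜 : ZMod 2 → Submodule F A) [GradedAlgebra 𝒜] (i : ZMod 2) : A →ₗ[F] A :=
  (𝒜 i).subtype ∘ₗ (DirectSum.component F (ZMod 2) (fun j => 𝒜 j) i) ∘ₗ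
    (DirectSum.decomposeAlgEquiv 𝒜).toLinearMap

/-- The supertrace of an endomorphism of a `ℤ/2`-graded algebra:
`str(f) = tr(f on A₀) − tr(f on A₁)`. -/
def superTrace {F A : Type*} [Field F] [Ring A] [Algebra F A]
    (𝒜 : ZMod 2 → Submodule F A) [GradedAlgebra 𝒜] (f : A →ₗ[F] A) : F :=
  LinearMap.trace F A (gradedProj 𝒜 0 ∘ₗ f ∘ₗ gradedProj 𝒜 0)
    - LinearMap.trace F A (gradedProj 𝒜 1 ∘ₗ f ∘ₗ gradedProj 𝒜 1)

section Aux

variable {F A : Type*} [Field F] [Ring A] [Algebra F A]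
    (𝒜 : ZMod 2 → Submodule F A) [GradedAlgebra 𝒜]

lemma gradedProj_apply (i : ZMod 2) (a : A) :
    gradedProj 𝒜 i a = (DirectSum.decompose 𝒜 a i : A) := rfl

lemma gradedProj_mem (i : ZMod 2) (a : A) : gradedProj 𝒜 i a ∈ 𝒜 i := by
  rw [gradedProj_apply]; exact (DirectSum.decompose 𝒜 a i).2

lemma gradedProj_of_mem_same {i : ZMod 2} {a : A} (h : a ∈ 𝒜 i) :
    gradedProj 𝒜 i a = a := by
  rw [gradedProj_apply]; exact DirectSum.decompose_of_mem_same 𝒜 h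

lemma gradedProj_of_mem_ne {i j : ZMod 2} {a : A} (h : a ∈ 𝒜 i) (hij : i ≠ j) :
    gradedProj 𝒜 j a = 0 := by
  rw [gradedProj_apply]; exact DirectSum.decompose_of_mem_ne 𝒜 h hij

lemma gradedProj_sum (a : A) : gradedProj 𝒜 0 a + gradedProj 𝒜 1 a = a := by
  classical
  have h := DirectSum.sum_support_decompose 𝒜 a
  have h2 : ∑ i : ZMod 2, ((DirectSum.decompose 𝒜 a i : A)) =
      ∑ i ∈ (DirectSum.decompose 𝒜 a).support, ((DirectSum.decompose 𝒜 a i : A)) := by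
    refine (Finset.sum_subset (Finset.subset_univ _) ?_).symm
    intro i _ hi
    rw [DFinsupp.notMem_support_iff.mp hi]; rfl
  have h3 : ∑ i : ZMod 2, ((DirectSum.decompose 𝒜 a i : A)) =
      (DirectSum.decompose 𝒜 a 0 : A) + (DirectSum.decompose 𝒜 a 1 : A) :=
    Fin.sum_univ_two _
  show (DirectSum.decompose 𝒜 a 0 : A) + (DirectSum.decompose 𝒜 a 1 : A) = a
  rw [← h3, h2, h]

/-- The supertrace of left multiplication by an odd element vanishes. -/
lemma superTrace_mulLeft_odd {z : A} (hz : z ∈ 𝒜 1) :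
    superTrace 𝒜 (LinearMap.mulLeft F z) = 0 := by
  have key : ∀ i : ZMod 2,
      gradedProj 𝒜 i ∘ₗ LinearMap.mulLeft F z ∘ₗ gradedProj 𝒜 i = 0 := by
    intro i
    ext a
    have hmem : z * gradedProj 𝒜 i a ∈ 𝒜 (1 + i) :=
      SetLike.mul_mem_graded hz (gradedProj_mem 𝒜 i a)
    have hne : ∀ j : ZMod 2, (1 + j : ZMod 2) ≠ j := by decide
    simpa using gradedProj_of_mem_ne 𝒜 hmem (hne i)
  simp [superTrace, key 0, key 1]

/-- The supertrace of left multiplication by an even element that squares to zero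
vanishes. -/
lemma superTrace_mulLeft_even_nil [FiniteDimensional F A] {z : A} (hz : z ∈ 𝒜 0)
    (hz2 : z * z = 0) : superTrace 𝒜 (LinearMap.mulLeft F z) = 0 := by
  have key : ∀ i : ZMod 2,
      LinearMap.trace F A (gradedProj 𝒜 i ∘ₗ LinearMap.mulLeft F z ∘ₗ gradedProj 𝒜 i)
        = 0 := by
    intro i
    have heq : gradedProj 𝒜 i ∘ₗ LinearMap.mulLeft F z ∘ₗ gradedProj 𝒜 i
        = LinearMap.mulLeft F z ∘ₗ gradedProj 𝒜 i := by
      ext a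
      have hmem : z * gradedProj 𝒜 i a ∈ 𝒜 i := by
        simpa using SetLike.mul_mem_graded hz (gradedProj_mem 𝒜 i a)
      simpa using gradedProj_of_mem_same 𝒜 hmem
    have hnil : IsNilpotent
        (gradedProj 𝒜 i ∘ₗ LinearMap.mulLeft F z ∘ₗ gradedProj 𝒜 i) := by
      refine ⟨2, ?_⟩
      rw [pow_two, heq]
      ext a
      have hmem : z * gradedProj 𝒜 i a ∈ 𝒜 i := by
        simpa using SetLike.mul_mem_graded hz (gradedProj_mem 𝒜 i a)
      simp [gradedProj_of_mem_same 𝒜 hmem, ← mul_assoc, hz2]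
    exact (LinearMap.isNilpotent_trace_of_isNilpotent hnil).eq_zero
  simp [superTrace, key 0, key 1]

lemma superTrace_add [FiniteDimensional F A] (f g : A →ₗ[F] A) :
    superTrace 𝒜 (f + g) = superTrace 𝒜 f + superTrace 𝒜 g := by
  simp [superTrace, LinearMap.comp_add, LinearMap.add_comp]
  ring

end Aux

/-- A finite-dimensional supercommutative superalgebra over a field of
characteristic zero whose supertrace form `b(x,y) = str(L_{xy})` is nondegenerate is
purely even: `A₁ = 0`. -/
theorem odd_part_eq_bot_of_supertrace_nondegenerate
    {F A : Type*} [Field F] [CharZero F] [Ring A] [Algebra F A] [FiniteDimensional F A]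
    (𝒜 : ZMod 2 → Submodule F A) [GradedAlgebra 𝒜]
    (hcomm : ∀ (i j : ZMod 2), ∀ x ∈ 𝒜 i, ∀ y ∈ 𝒜 j,
      x * y = (-1 : A) ^ (i.val * j.val) * (y * x))
    (hnd : ∀ x : A, (∀ y : A, superTrace 𝒜 (LinearMap.mulLeft F (x * y)) = 0) → x = 0) :
    𝒜 1 = ⊥ := by
  -- Supercommutativity for odd elements
  have h2 : ∀ z ∈ 𝒜 1, ∀ w ∈ 𝒜 1, z * w = -(w * z) := by
    intro z hz w hw
    have h := hcomm 1 1 z hz w hw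
    have hv : (1 : ZMod 2).val * (1 : ZMod 2).val = 1 := by decide
    rw [hv] at h
    simpa using h
  -- Odd elements square to zero
  have hsq : ∀ z ∈ 𝒜 1, z * z = 0 := by
    intro z hz
    have h := h2 z hz z hz
    have h2' : (2 : F) • (z * z) = 0 := by
      rw [two_smul]
      nth_rewrite 1 [h]
      exact neg_add_cancel _
    rcases smul_eq_zero.mp h2' with h | h
    · exact absurd h two_ne_zero
    · exact h
  rw [eq_bot_iff]
  intro x hx
  rw [Submodule.mem_bot]
  apply hnd
  intro y
  set y₀ := gradedProj 𝒜 0 y with hy₀def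
  set y₁ := gradedProj 𝒜 1 y with hy₁def
  have hy₀ : y₀ ∈ 𝒜 0 := gradedProj_mem 𝒜 0 y
  have hy₁ : y₁ ∈ 𝒜 1 := gradedProj_mem 𝒜 1 y
  have hysum : y₀ + y₁ = y := gradedProj_sum 𝒜 y
  have hsplit : x * y = x * y₀ + x * y₁ := by rw [← hysum, mul_add]
  have hmull : LinearMap.mulLeft F (x * y)
      = LinearMap.mulLeft F (x * y₀) + LinearMap.mulLeft F (x * y₁) := by
    ext a; simp [hsplit, add_mul, mul_assoc]
  rw [hmull, superTrace_add]
  -- x * y₀ is odd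
  have hodd : x * y₀ ∈ 𝒜 1 := by
    simpa using SetLike.mul_mem_graded hx hy₀
  -- x * y₁ is even and squares to zero
  have heven : x * y₁ ∈ 𝒜 0 := by
    have := SetLike.mul_mem_graded hx hy₁
    have h11 : (1 + 1 : ZMod 2) = 0 := by decide
    rwa [h11] at this
  have hnil : (x * y₁) * (x * y₁) = 0 := by
    have hyx : y₁ * x = -(x * y₁) := h2 y₁ hy₁ x hx
    calc (x * y₁) * (x * y₁) = x * ((y₁ * x) * y₁) := by
          rw [mul_assoc, ← mul_assoc y₁ x y₁]
      _ = -(x * (x * (y₁ * y₁))) := by rw [hyx]; simp [mul_assoc]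
      _ = -((x * x) * (y₁ * y₁)) := by rw [mul_assoc]
      _ = 0 := by rw [hsq x hx]; simp
  rw [superTrace_mulLeft_odd 𝒜 hodd, superTrace_mulLeft_even_nil 𝒜 heven hnil, add_zero]
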